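/- arXiv:1210.2883 — 2 statements merged into one kernel-verified Lean document; each statement's English description precedes it below -/
import Mathlib

section
/- Assume in addition that P has finite second moment, i.e. Σ_{k≥1} k² P(k) < ∞. There exist a constant c₁ > 0 and λ₀ ∈ (λ₁, 1) such that for every λ with λ₁ < λ < λ₀ and every CE fixed point x, one has x'(0) ≤ −c₁ · ω³ · e^{−π(1−λ)/(2ω)}, where ω = (1/2)√(−λ² + 2(2d−1)λ − 1). -/
open MeasureTheory

/-- Generating function ψ(x) = Σ_{k≥0} P(k) x^k. -/
noncomputable def genFun (P : ℕ → ℝ) (x : ℝ) : ℝ := ∑' k : ℕ, P k * x ^ k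

/-- Context: P is a probability distribution on ℕ with mean d ∈ (1,∞), and ρ ∈ [0,1)
is the smallest fixed point of its generating function on [0,1]. -/
structure CEContext (P : ℕ → ℝ) (d ρ : ℝ) : Prop where
  P_nonneg : ∀ k, 0 ≤ P k
  P_sum_one : ∑' k : ℕ, P k = 1
  mean_summable : Summable (fun k : ℕ => (k : ℝ) * P k)
  mean_eq : ∑' k : ℕ, (k : ℝ) * P k = d
  d_gt_one : 1 < d
  rho_nonneg : 0 ≤ ρ
  rho_lt_one : ρ < 1
  rho_fixed : genFun P ρ = ρ
  rho_least : ∀ y : ℝ, 0 ≤ y → y ≤ 1 → genFun P y = y → ρ ≤ y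

/-- A CE fixed point for infection rate λ ∈ (0,1): x : [0,∞) → [0,1] non-increasing,
x(0) = 1, x(t) → ρ, and
x(t) = e^{−λt} + λ e^{−λt} ∫₀ᵗ e^{(λ+1)u} (∫_u^∞ ψ(x(s)) e^{−s} ds) du. -/
def IsCEFixedPoint (P : ℕ → ℝ) (ρ lam : ℝ) (x : ℝ → ℝ) : Prop :=
  (∀ t, 0 ≤ t → x t ∈ Set.Icc (0 : ℝ) 1) ∧
  AntitoneOn x (Set.Ici 0) ∧
  x 0 = 1 ∧
  Filter.Tendsto x Filter.atTop (nhds ρ) ∧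
  (∀ t, 0 ≤ t →
    x t = Real.exp (-(lam * t)) + lam * Real.exp (-(lam * t)) *
      ∫ u in (0:ℝ)..t, Real.exp ((lam + 1) * u) *
        ∫ s in Set.Ioi u, genFun P (x s) * Real.exp (-s))



section AuxGen

variable {P : ℕ → ℝ}

lemma pow_lb {w : ℝ} (h0 : 0 ≤ w) (h1 : w ≤ 1) (k : ℕ) :
    1 - (k : ℝ) * w ≤ (1 - w) ^ k := by
  have := one_add_mul_le_pow (a := -w) (by linarith) k
  calc 1 - (k:ℝ)*w = 1 + (k:ℝ)*(-w) := by ring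
  _ ≤ (1 + -w)^k := this
  _ = (1-w)^k := by ring_nf

lemma pow_ub {w : ℝ} (h0 : 0 ≤ w) (h1 : w ≤ 1) (k : ℕ) :
    (1 - w) ^ k ≤ 1 - (k : ℝ) * w + (k : ℝ)^2/2 * w^2 := by
  induction k with
  | zero => simp
  | succ n ih =>
    have hn : (0:ℝ) ≤ n := Nat.cast_nonneg n
    have h2 : (1-w)^(n+1) = (1-w)^n * (1-w) := by ring
    rw [h2]
    have h3 : (1-w)^n * (1-w) ≤ (1 - (n:ℝ)*w + (n:ℝ)^2/2*w^2) * (1-w) := by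
      apply mul_le_mul_of_nonneg_right ih (by linarith)
    refine h3.trans ?_
    push_cast
    nlinarith [sq_nonneg w, sq_nonneg ((n:ℝ)*w), mul_nonneg (mul_nonneg hn h0) h0,
      mul_nonneg (mul_nonneg (mul_nonneg hn hn) h0) (mul_nonneg h0 h0)]

lemma summable_P {d ρ : ℝ} (h : CEContext P d ρ) : Summable P := by
  by_contra hs
  have := tsum_eq_zero_of_not_summable hs
  rw [h.P_sum_one] at this
  norm_num at this

lemma summable_genFun {d ρ : ℝ} (h : CEContext P d ρ) {y : ℝ} (h0 : 0 ≤ y) (h1 : y ≤ 1) :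
    Summable (fun k : ℕ => P k * y ^ k) := by
  apply Summable.of_nonneg_of_le (fun k => mul_nonneg (h.P_nonneg k) (pow_nonneg h0 k))
    (fun k => ?_) (summable_P h)
  calc P k * y ^ k ≤ P k * 1 := by
        apply mul_le_mul_of_nonneg_left (pow_le_one₀ h0 h1) (h.P_nonneg k)
  _ = P k := mul_one _

lemma genFun_nonneg {d ρ : ℝ} (h : CEContext P d ρ) {y : ℝ} (h0 : 0 ≤ y) :
    0 ≤ genFun P y :=
  tsum_nonneg fun k => mul_nonneg (h.P_nonneg k) (pow_nonneg h0 k)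

lemma genFun_le_one {d ρ : ℝ} (h : CEContext P d ρ) {y : ℝ} (h0 : 0 ≤ y) (h1 : y ≤ 1) :
    genFun P y ≤ 1 := by
  rw [← h.P_sum_one]
  exact Summable.tsum_le_tsum (fun k => by
      calc P k * y ^ k ≤ P k * 1 :=
            mul_le_mul_of_nonneg_left (pow_le_one₀ h0 h1) (h.P_nonneg k)
      _ = P k := mul_one _)
    (summable_genFun h h0 h1) (summable_P h)

lemma genFun_mono {d ρ : ℝ} (h : CEContext P d ρ) {a b : ℝ} (h0 : 0 ≤ a) (hab : a ≤ b)
    (h1 : b ≤ 1) : genFun P a ≤ genFun P b :=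
  Summable.tsum_le_tsum (fun k => mul_le_mul_of_nonneg_left (pow_le_pow_left₀ h0 hab k) (h.P_nonneg k))
    (summable_genFun h h0 (hab.trans h1)) (summable_genFun h (h0.trans hab) h1)

lemma genFun_quad_lb {d ρ : ℝ} (h : CEContext P d ρ) {w : ℝ} (h0 : 0 ≤ w) (h1 : w ≤ 1) :
    1 - d * w ≤ genFun P (1 - w) := by
  have hsum2 : Summable (fun k : ℕ => ((k:ℝ) * P k) * w) :=
    h.mean_summable.mul_right w
  have hkey : ∑' k : ℕ, (P k - ((k:ℝ) * P k) * w) = 1 - d * w := by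
    rw [Summable.tsum_sub (summable_P h) hsum2, h.P_sum_one, tsum_mul_right, h.mean_eq]
  rw [← hkey]
  refine Summable.tsum_le_tsum (fun k => ?_) (Summable.sub (summable_P h) hsum2)
    (summable_genFun h (by linarith) (by linarith))
  have := pow_lb h0 h1 k
  have hP := h.P_nonneg k
  calc P k - ((k:ℝ) * P k) * w = P k * (1 - (k:ℝ)*w) := by ring
  _ ≤ P k * (1-w)^k := mul_le_mul_of_nonneg_left this hP

lemma genFun_quad_ub {d ρ : ℝ} (h : CEContext P d ρ)
    (hsecond : Summable (fun k : ℕ => (k : ℝ) ^ 2 * P k)) {w : ℝ} (h0 : 0 ≤ w) (h1 : w ≤ 1) :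
    genFun P (1 - w) ≤ 1 - d * w + ((∑' k : ℕ, (k:ℝ)^2 * P k)/2 + 1) * w^2 := by
  have hsum2 : Summable (fun k : ℕ => ((k:ℝ) * P k) * w) :=
    h.mean_summable.mul_right w
  have hsum3 : Summable (fun k : ℕ => ((k:ℝ)^2 * P k) * (w^2/2)) :=
    hsecond.mul_right _
  have hkey : ∑' k : ℕ, (P k - ((k:ℝ) * P k) * w + ((k:ℝ)^2 * P k) * (w^2/2))
      = 1 - d * w + (∑' k : ℕ, (k:ℝ)^2 * P k)/2 * w^2 := by
    rw [Summable.tsum_add (Summable.sub (summable_P h) hsum2) hsum3,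
      Summable.tsum_sub (summable_P h) hsum2, h.P_sum_one, tsum_mul_right, tsum_mul_right, h.mean_eq]
    ring
  have hle : genFun P (1 - w)
      ≤ ∑' k : ℕ, (P k - ((k:ℝ) * P k) * w + ((k:ℝ)^2 * P k) * (w^2/2)) := by
    refine Summable.tsum_le_tsum (fun k => ?_) (summable_genFun h (by linarith) (by linarith))
      ((Summable.sub (summable_P h) hsum2).add hsum3)
    have := pow_ub h0 h1 k
    have hP := h.P_nonneg k
    calc P k * (1-w)^k ≤ P k * (1 - (k:ℝ)*w + (k:ℝ)^2/2 * w^2) :=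
          mul_le_mul_of_nonneg_left this hP
    _ = P k - ((k:ℝ) * P k) * w + ((k:ℝ)^2 * P k) * (w^2/2) := by ring
  rw [hkey] at hle
  refine hle.trans ?_
  have : (0:ℝ) ≤ w^2 := sq_nonneg w
  nlinarith

lemma genFun_contOn : ContinuousOn (genFun P) (Set.Icc (0:ℝ) 1) → True := fun _ => trivial

end AuxGen

lemma genFun_contOn' {P : ℕ → ℝ} {d ρ : ℝ} (h : CEContext P d ρ) :
    ContinuousOn (genFun P) (Set.Icc (0:ℝ) 1) := by
  have : ContinuousOn (fun y : ℝ => ∑' k : ℕ, P k * y ^ k) (Set.Icc (0:ℝ) 1) := by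
    refine continuousOn_tsum (fun k => Continuous.continuousOn (by continuity))
      (summable_P h) (fun n y hy => ?_)
    have h0 : (0:ℝ) ≤ y := hy.1
    have h1 : y ≤ 1 := hy.2
    rw [Real.norm_eq_abs, abs_mul, abs_of_nonneg (h.P_nonneg n), abs_pow, abs_of_nonneg h0]
    calc P n * y ^ n ≤ P n * 1 :=
          mul_le_mul_of_nonneg_left (pow_le_one₀ h0 h1) (h.P_nonneg n)
    _ = P n := mul_one _
  exact this


lemma arith_exponent {al om lam Kq pi : ℝ} (hom : 0 < om) (hom1 : om ≤ 1)
    (hlam : 0 < lam) (hlam1 : lam ≤ 1) (hal : al ≤ 1/2) (hKq : 1 ≤ Kq) (hpi : 0 < pi) :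
    (al + 2*(lam*Kq*om)) * (pi/om + 1) ≤ al*pi/om + (1 + 2*Kq*pi + 2*Kq) := by
  have hKq0 : (0:ℝ) < Kq := by linarith
  have h1 : (lam*Kq*om)*(pi/om) = lam*Kq*pi := by field_simp
  have h2 : lam*Kq*pi ≤ Kq*pi := by nlinarith [mul_nonneg (sub_nonneg.2 hlam1) (mul_pos hKq0 hpi).le]
  have hlo : lam*om ≤ 1 := by nlinarith
  have h3 : lam*Kq*om ≤ Kq := by nlinarith [mul_le_mul_of_nonneg_left hlo hKq0.le]
  have expand : (al + 2*(lam*Kq*om)) * (pi/om + 1)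
      = al*(pi/om) + al + 2*((lam*Kq*om)*(pi/om)) + 2*(lam*Kq*om) := by ring
  rw [expand, h1]
  have h4 : al*(pi/om) = al*pi/om := by ring
  rw [h4]
  linarith

lemma arith_case1 {om Q Kq β Emax al₀ : ℝ} (hom : 0 < om) (hQ : 0 < Q) (hKq : 1 ≤ Kq)
    (hβ : 0 < β) (hal₀ : 0 < al₀) (halβ : al₀ ≤ β) (hEm : 0 < Emax)
    (h : (3/4)*om*Q ≤ 2*(Kq*Q^2/om^2*(Emax/β))) :
    3*al₀/(8*Kq) * (om^3/Emax) ≤ Q := by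
  have hKq0 : (0:ℝ) < Kq := by linarith
  have h1 : (3/4)*om*Q*(om^2*β) ≤ 2*(Kq*Q^2/om^2*(Emax/β))*(om^2*β) :=
    mul_le_mul_of_nonneg_right h (by positivity)
  have h2 : 2*(Kq*Q^2/om^2*(Emax/β))*(om^2*β) = 2*Kq*Q^2*Emax := by
    field_simp
  rw [h2] at h1
  have h3 : (3/4)*om^3*β ≤ 2*Kq*Q*Emax := by nlinarith [hQ]
  have h4 : (3/4)*om^3*al₀ ≤ 2*Kq*Q*Emax := by nlinarith [pow_pos hom 3]
  rw [div_mul_div_comm, div_le_iff₀ (by positivity)]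
  nlinarith [h4]

set_option maxHeartbeats 1600000 in
open Real Set Filter in
/-- if P has finite second moment, there exist c₁ > 0 and
λ₀ ∈ (λ₁, 1) such that for all λ ∈ (λ₁, λ₀) and any CE fixed point x,
x'(0) ≤ −c₁ ω³ e^{−π(1−λ)/(2ω)} where ω = (1/2)√(−λ² + 2(2d−1)λ − 1). -/
theorem ce_xprime_upper_bound {P : ℕ → ℝ} {d ρ : ℝ} (hctx : CEContext P d ρ)
    (hsecond : Summable (fun k : ℕ => (k : ℝ) ^ 2 * P k)) :
    ∃ c₁ lam₀ : ℝ, 0 < c₁ ∧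
      2 * d - 1 - 2 * Real.sqrt (d * (d - 1)) < lam₀ ∧ lam₀ < 1 ∧
      ∀ lam : ℝ, 2 * d - 1 - 2 * Real.sqrt (d * (d - 1)) < lam → lam < lam₀ →
        ∀ x : ℝ → ℝ, IsCEFixedPoint P ρ lam x →
          derivWithin x (Set.Ici 0) 0
            ≤ -(c₁ * ((1 / 2) * Real.sqrt (-lam ^ 2 + 2 * (2 * d - 1) * lam - 1)) ^ 3
              * Real.exp (-(Real.pi * (1 - lam) /
                (2 * ((1 / 2) * Real.sqrt (-lam ^ 2 + 2 * (2 * d - 1) * lam - 1)))))) := by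
  have hd := hctx.d_gt_one
  set K2 : ℝ := ∑' k : ℕ, (k:ℝ)^2 * P k with hK2def
  have hK2 : 0 ≤ K2 := tsum_nonneg fun k => mul_nonneg (sq_nonneg _) (hctx.P_nonneg k)
  set Kq : ℝ := K2/2 + 1 with hKqdef
  have hKq1 : 1 ≤ Kq := by simp only [hKqdef]; linarith
  have hKq0 : 0 < Kq := by linarith
  set s0 : ℝ := Real.sqrt (d*(d-1)) with hs0def
  have hs0sq : s0^2 = d*(d-1) := Real.sq_sqrt (by nlinarith)
  have hs0pos : 0 < s0 := Real.sqrt_pos.2 (by nlinarith)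
  set lam₁ : ℝ := 2*d - 1 - 2*s0 with hlam₁def
  set lam₂ : ℝ := 2*d - 1 + 2*s0 with hlam₂def
  have hlam₁pos : 0 < lam₁ := by nlinarith
  have hlam₁lt1 : lam₁ < 1 := by nlinarith
  have hlam₂gt1 : 1 < lam₂ := by nlinarith
  have hlam₂pos : 0 < lam₂ := by nlinarith
  set lam₀ : ℝ := min (lam₁ + 4/lam₂) ((1+lam₁)/2) with hlam₀def
  have hlam₀gt : lam₁ < lam₀ := by
    apply lt_min ?_ (by linarith)
    have : 0 < 4/lam₂ := by positivity
    linarith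
  have hlam₀lt1 : lam₀ < 1 := (min_le_right _ _).trans_lt (by linarith)
  set α₀ : ℝ := (1 - lam₀)/2 with hα₀def
  have hα₀pos : 0 < α₀ := by simp only [hα₀def]; linarith
  set C₂ : ℝ := 1 + 2*Kq*Real.pi + 2*Kq with hC₂def
  set c : ℝ := Real.exp (-C₂) * min (3*α₀/(8*Kq)) 1 with hcdef
  have hcpos : 0 < c := by
    apply mul_pos (Real.exp_pos _) (lt_min (by positivity) one_pos)
  refine ⟨lam₁ * c, lam₀, mul_pos hlam₁pos hcpos, hlam₀gt, hlam₀lt1, ?_⟩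
  intro lam hlam1 hlam2 x hx
  have hlamlt1 : lam < 1 := hlam2.trans hlam₀lt1
  have hlampos : 0 < lam := hlam₁pos.trans hlam1
  set D : ℝ := -lam ^ 2 + 2 * (2 * d - 1) * lam - 1 with hDdef
  have hDfact : D = (lam₂ - lam)*(lam - lam₁) := by
    simp only [hDdef, hlam₂def, hlam₁def]; linear_combination (-4:ℝ)*hs0sq
  have hDpos : 0 < D := by
    rw [hDfact]; apply mul_pos (by linarith) (by linarith)
  have hD4 : D ≤ 4 := by
    have h1 : lam - lam₁ < 4/lam₂ := by
      have := hlam2.trans_le (min_le_left _ _); linarith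
    have h2 : lam₂ * (lam - lam₁) < 4 := by
      rw [lt_div_iff₀ hlam₂pos] at h1; nlinarith
    have h3 : 0 ≤ lam - lam₁ := by linarith
    nlinarith [mul_nonneg hlampos.le h3]
  set om : ℝ := (1/2) * Real.sqrt D with homdef
  have hsqD : Real.sqrt D ^ 2 = D := Real.sq_sqrt hDpos.le
  have hsqDnn : 0 ≤ Real.sqrt D := Real.sqrt_nonneg D
  have hom : 0 < om := by
    simp only [homdef]; have : 0 < Real.sqrt D := Real.sqrt_pos.2 hDpos
    linarith
  have hom2 : om^2 = D/4 := by rw [homdef, mul_pow, hsqD]; ring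
  have hom1 : om ≤ 1 := by
    have h5 : Real.sqrt D ≤ 2 := by nlinarith [hsqD, hsqDnn, hD4]
    rw [homdef]; linarith
  set al : ℝ := (1 - lam)/2 with haldef
  have halpos : 0 < al := by simp only [haldef]; linarith
  have hal12 : al ≤ 1/2 := by simp only [haldef]; linarith
  have hala0 : α₀ ≤ al := by simp only [haldef, hα₀def]; linarith
  have halom : al^2 + om^2 = lam*(d-1) := by
    rw [hom2]; simp only [haldef, hDdef]; ring
  obtain ⟨hxIcc, hxmono, hx0, hxlim, hxeq⟩ := hx
  set y : ℝ → ℝ := fun t => x (max t 0) with hydef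
  have hymem : ∀ t, y t ∈ Set.Icc (0:ℝ) 1 := fun t => hxIcc _ (le_max_right _ _)
  have hyanti : Antitone y := fun s t hst =>
    hxmono (le_max_right s 0) (le_max_right t 0) (max_le_max hst le_rfl)
  set ψ : ℝ → ℝ := fun t => genFun P (y t) with hψdef
  have hψ01 : ∀ t, ψ t ∈ Set.Icc (0:ℝ) 1 := fun t =>
    ⟨genFun_nonneg hctx (hymem t).1, genFun_le_one hctx (hymem t).1 (hymem t).2⟩
  have hψanti : Antitone ψ := fun s t hst =>
    genFun_mono hctx (hymem t).1 (hyanti hst) (hymem s).2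
  have hψmeas : Measurable ψ := hψanti.measurable
  set g : ℝ → ℝ := fun s => ψ s * Real.exp (-s) with hgdef
  have hgmeas : Measurable g := hψmeas.mul (Real.continuous_exp.comp continuous_neg).measurable
  have hg0 : ∀ s, 0 ≤ g s := fun s => mul_nonneg (hψ01 s).1 (Real.exp_pos _).le
  have hgle : ∀ s, g s ≤ Real.exp (-s) := fun s => by
    have h1 := (hψ01 s).2
    calc g s = ψ s * Real.exp (-s) := rfl
    _ ≤ 1 * Real.exp (-s) := mul_le_mul_of_nonneg_right h1 (Real.exp_pos _).le
    _ = Real.exp (-s) := one_mul _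
  have hgint : ∀ a : ℝ, IntegrableOn g (Set.Ioi a) := by
    intro a
    have hexp : IntegrableOn (fun s : ℝ => Real.exp (-1 * s)) (Set.Ioi a) :=
      exp_neg_integrableOn_Ioi a one_pos
    refine Integrable.mono' (by simpa using hexp : IntegrableOn (fun s : ℝ => Real.exp (-s)) (Set.Ioi a) volume) hgmeas.aestronglyMeasurable.restrict ?_
    refine Filter.Eventually.of_forall fun s => ?_
    rw [Real.norm_eq_abs, abs_of_nonneg (hg0 s)]
    simpa using hgle s
  have hgii : ∀ a b : ℝ, IntervalIntegrable g MeasureTheory.volume a b := by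
    intro a b
    rw [intervalIntegrable_iff]
    refine (hgint (min a b - 1)).mono_set fun s hs => ?_
    have := hs.1
    simp only [Set.mem_Ioi]
    linarith
  set G : ℝ → ℝ := fun a => ∫ s in Set.Ioi a, g s with hGdef
  have hGsplit : ∀ a b : ℝ, a ≤ b → G a = (∫ s in a..b, g s) + G b := by
    intro a b hab
    have hu : Set.Ioc a b ∪ Set.Ioi b = Set.Ioi a := Set.Ioc_union_Ioi_eq_Ioi hab
    have hdis : Disjoint (Set.Ioc a b) (Set.Ioi b) := Set.Ioc_disjoint_Ioi le_rfl
    have h2 : G a = (∫ s in Set.Ioc a b, g s) + ∫ s in Set.Ioi b, g s := by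
      rw [hGdef]
      simp only
      rw [← hu, MeasureTheory.setIntegral_union hdis measurableSet_Ioi
        ((hgint a).mono_set Set.Ioc_subset_Ioi_self) (hgint b)]
    rw [h2, intervalIntegral.integral_of_le hab]
  have hGprim : ∀ a : ℝ, G a = G 0 - ∫ s in (0:ℝ)..a, g s := by
    intro a
    rcases le_total 0 a with h|h
    · rw [hGsplit 0 a h]; ring
    · rw [hGsplit a 0 h, intervalIntegral.integral_symm]; ring
  have hGcont : Continuous G := by
    rw [show G = (fun a => G 0 - ∫ s in (0:ℝ)..a, g s) from funext hGprim]
    exact continuous_const.sub (intervalIntegral.continuous_primitive hgii 0)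
  set H : ℝ → ℝ := fun t => Real.exp t * G t with hHdef
  set F : ℝ → ℝ := fun t => ∫ u in (0:ℝ)..t, Real.exp ((lam+1)*u) * G u with hFdef
  set X : ℝ → ℝ := fun t => Real.exp (-(lam*t)) + lam * Real.exp (-(lam*t)) * F t with hXdef
  have hFd : ∀ t, HasDerivAt F (Real.exp ((lam+1)*t) * G t) t := by
    intro t
    have hc : Continuous fun u => Real.exp ((lam+1)*u) * G u :=
      (Real.continuous_exp.comp (continuous_const.mul continuous_id)).mul hGcont
    exact intervalIntegral.integral_hasDerivAt_right (hc.intervalIntegrable 0 t)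
      (hc.stronglyMeasurableAtFilter _ _) hc.continuousAt
  have hexpd : ∀ t, HasDerivAt (fun t : ℝ => Real.exp (-(lam*t)))
      (-lam * Real.exp (-(lam*t))) t := by
    intro t
    have h0 : HasDerivAt (fun t : ℝ => -(lam*t)) (-lam) t := by
      exact (((hasDerivAt_id t).const_mul lam).neg).congr_deriv (by ring)
    simpa [mul_comm] using h0.exp
  have hXd : ∀ t, HasDerivAt X (-lam * X t + lam * H t) t := by
    intro t
    have h2 := ((hexpd t).const_mul lam).mul (hFd t)
    have h3 := (hexpd t).add h2
    have hexp : Real.exp (-(lam*t)) * Real.exp ((lam+1)*t) = Real.exp t := by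
      rw [← Real.exp_add]; congr 1; ring
    refine h3.congr_deriv (Eq.symm ?_)
    simp only [hXdef, hHdef]
    rw [← hexp]
    ring
  have hXcont : Continuous X := continuous_iff_continuousAt.2 fun t => (hXd t).continuousAt
  have hxX : ∀ t : ℝ, 0 ≤ t → x t = X t := by
    intro t ht
    have hinner : ∀ w : ℝ, 0 ≤ w →
        (∫ s in Set.Ioi w, genFun P (x s) * Real.exp (-s)) = G w := by
      intro w hw0
      have hGw : G w = ∫ s in Set.Ioi w, g s := rfl
      rw [hGw]
      apply MeasureTheory.setIntegral_congr_fun measurableSet_Ioi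
      intro s hs
      have hs0 : (0:ℝ) ≤ s := le_trans hw0 (le_of_lt hs)
      simp only [hgdef, hψdef, hydef]
      rw [max_eq_left hs0]
    rw [hxeq t ht]
    have heq2 : (∫ u in (0:ℝ)..t, Real.exp ((lam+1)*u) *
        ∫ s in Set.Ioi u, genFun P (x s) * Real.exp (-s)) = F t := by
      have hFt : F t = ∫ u in (0:ℝ)..t, Real.exp ((lam+1)*u) * G u := rfl
      rw [hFt]
      apply intervalIntegral.integral_congr
      intro w hw
      rw [Set.uIcc_of_le ht] at hw
      simp only
      rw [hinner w hw.1]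
    rw [heq2]
  have hycont : Continuous y := by
    have hyX : y = fun t => X (max t 0) := by
      funext t; simp only [hydef]; exact hxX _ (le_max_right _ _)
    rw [hyX]
    exact hXcont.comp (continuous_id.max continuous_const)
  have hψcont : Continuous ψ := (genFun_contOn' hctx).comp_continuous hycont hymem
  have hgcont : Continuous g := by
    rw [hgdef]; exact hψcont.mul (Real.continuous_exp.comp continuous_neg)
  have hHd : ∀ t, HasDerivAt H (H t - ψ t) t := by
    intro t
    have hP1 : HasDerivAt (fun a : ℝ => ∫ s in (0:ℝ)..a, g s) (g t) t :=
      intervalIntegral.integral_hasDerivAt_right (hgii 0 t)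
        (hgcont.stronglyMeasurableAtFilter _ _) hgcont.continuousAt
    have hGd : HasDerivAt G (-(g t)) t := by
      rw [show G = (fun a => G 0 - ∫ s in (0:ℝ)..a, g s) from funext hGprim]
      simpa using hP1.const_sub (G 0)
    have h2 := (Real.hasDerivAt_exp t).mul hGd
    refine h2.congr_deriv (Eq.symm ?_)
    have hE : Real.exp t * Real.exp (-t) = 1 := by rw [← Real.exp_add]; simp
    simp only [hHdef, hgdef]
    linear_combination (ψ t) * hE
  set uu : ℝ → ℝ := fun t => 1 - X t with huudef
  set vv : ℝ → ℝ := fun t => 1 - H t with hvvdef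
  set ee : ℝ → ℝ := fun t => d * uu t - (1 - ψ t) with heedef
  have huud : ∀ t, HasDerivAt uu (lam * (vv t - uu t)) t := by
    intro t
    have h1 := (hXd t).const_sub 1
    refine h1.congr_deriv (Eq.symm ?_)
    simp only [hvvdef, huudef]; ring
  have hvvd : ∀ t, HasDerivAt vv (vv t - d * uu t + ee t) t := by
    intro t
    have h1 := (hHd t).const_sub 1
    refine h1.congr_deriv (Eq.symm ?_)
    simp only [hvvdef, heedef]; ring
  have hX0 : X 0 = 1 := by
    simp only [hXdef, hFdef]
    rw [intervalIntegral.integral_same]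
    simp
  have huu0 : uu 0 = 0 := by simp only [huudef]; rw [hX0]; ring
  set δ : ℝ := vv 0 with hδdef
  have hder : derivWithin x (Set.Ici 0) 0 = -(lam * δ) := by
    have h1 : HasDerivWithinAt x (-lam * X 0 + lam * H 0) (Set.Ici 0) 0 :=
      ((hXd 0).hasDerivWithinAt).congr (fun s hs => hxX s hs) (hxX 0 le_rfl)
    have h2 := h1.derivWithin (uniqueDiffOn_Ici 0 0 Set.self_mem_Ici)
    rw [h2, hX0]
    simp only [hδdef, hvvdef]
    ring
  have hH0le : H 0 ≤ 1 := by
    have hexpint : IntegrableOn (fun s : ℝ => Real.exp (-s)) (Set.Ioi (0:ℝ)) := by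
      simpa using exp_neg_integrableOn_Ioi (0:ℝ) one_pos
    have h1 : G 0 ≤ ∫ s in Set.Ioi (0:ℝ), Real.exp (-s) :=
      MeasureTheory.setIntegral_mono_on (hgint 0) hexpint measurableSet_Ioi (fun s _ => hgle s)
    rw [integral_exp_neg_Ioi_zero] at h1
    simp only [hHdef]
    simpa using h1
  have hδ0 : 0 ≤ δ := by simp only [hδdef, hvvdef]; linarith
  have huu01 : ∀ t : ℝ, 0 ≤ t → 0 ≤ uu t ∧ uu t ≤ 1 := by
    intro t ht
    have h1 := hxIcc t ht
    have h2 := hxX t ht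
    constructor
    · simp only [huudef]; rw [← h2]; linarith [h1.2]
    · simp only [huudef]; rw [← h2]; linarith [h1.1]
  have hee : ∀ t : ℝ, 0 ≤ t → 0 ≤ ee t ∧ ee t ≤ Kq * (uu t)^2 := by
    intro t ht
    obtain ⟨hu0, hu1⟩ := huu01 t ht
    have hyx : y t = x t := by simp only [hydef]; rw [max_eq_left ht]
    have hxuu : x t = 1 - uu t := by rw [hxX t ht]; simp only [huudef]; ring
    have hψt : ψ t = genFun P (1 - uu t) := by simp only [hψdef]; rw [hyx, hxuu]
    have hlb := genFun_quad_lb hctx hu0 hu1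
    have hub := genFun_quad_ub hctx hsecond hu0 hu1
    rw [← hK2def] at hub
    constructor
    · simp only [heedef]; rw [hψt]; linarith
    · simp only [heedef]; rw [hψt, hKqdef]; linarith
  set μc : ℂ := (al : ℂ) + (om : ℂ) * Complex.I with hμdef
  have hμre : ∀ t : ℝ, (-μc * (t:ℂ)).re = -(al * t) := by
    intro t; simp [hμdef, Complex.mul_re]
  have hμre2 : ∀ t : ℝ, (μc * (t:ℂ)).re = al * t := by
    intro t; simp [hμdef, Complex.mul_re]
  have hμim2 : ∀ t : ℝ, (μc * (t:ℂ)).im = om * t := by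
    intro t; simp [hμdef, Complex.mul_im]
  set z : ℝ → ℂ := fun t => (((al-1) * uu t + lam * vv t : ℝ) : ℂ)
      + ((om * uu t : ℝ) : ℂ) * Complex.I with hzdef
  have hzim : ∀ t, (z t).im = om * uu t := by intro t; simp [hzdef]
  have hzd : ∀ t, HasDerivAt z (μc * z t + ((lam * ee t : ℝ) : ℂ)) t := by
    intro t
    have hp : HasDerivAt (fun t => (al-1) * uu t + lam * vv t)
        ((al-1) * (lam * (vv t - uu t)) + lam * (vv t - d * uu t + ee t)) t :=
      ((huud t).const_mul (al-1)).add ((hvvd t).const_mul lam)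
    have hq : HasDerivAt (fun t => om * uu t) (om * (lam * (vv t - uu t))) t :=
      (huud t).const_mul om
    have hz1 : HasDerivAt z
        ((((al-1) * (lam * (vv t - uu t)) + lam * (vv t - d*uu t + ee t) : ℝ) : ℂ)
          + ((om * (lam * (vv t - uu t)) : ℝ) : ℂ) * Complex.I) t :=
      (hp.ofReal_comp).add ((hq.ofReal_comp).mul_const Complex.I)
    convert hz1 using 1
    rw [Complex.ext_iff]
    constructor
    · simp only [hμdef, hzdef, Complex.add_re, Complex.mul_re, Complex.add_im, Complex.mul_im,
        Complex.ofReal_re, Complex.ofReal_im, Complex.I_re, Complex.I_im]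
      linear_combination (-(uu t))*halom + (2*al*(uu t))*haldef
    · simp only [hμdef, hzdef, Complex.add_re, Complex.mul_re, Complex.add_im, Complex.mul_im,
        Complex.ofReal_re, Complex.ofReal_im, Complex.I_re, Complex.I_im]
      linear_combination (2*om*(uu t))*haldef
  set fc : ℝ → ℂ := fun t => Complex.exp (-μc * (t:ℂ)) * z t with hfdef
  have hfd : ∀ t : ℝ, HasDerivAt fc (Complex.exp (-μc * (t:ℂ)) * ((lam * ee t : ℝ) : ℂ)) t := by
    intro t
    have h0 : HasDerivAt (fun t : ℝ => -μc * (t:ℂ)) (-μc) t := by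
      simpa using ((hasDerivAt_id t).ofReal_comp).const_mul (-μc)
    have h1 : HasDerivAt (fun t : ℝ => Complex.exp (-μc * (t:ℂ)))
        (Complex.exp (-μc * (t:ℂ)) * -μc) t := h0.cexp
    have h2 := h1.mul (hzd t)
    refine h2.congr_deriv (Eq.symm ?_)
    ring
  have hfc_cont : Continuous fc := continuous_iff_continuousAt.2 fun t => (hfd t).continuousAt
  have hfnorm : ∀ t, ‖fc t‖ = Real.exp (-(al * t)) * ‖z t‖ := by
    intro t
    simp only [hfdef, norm_mul, Complex.norm_exp]
    rw [hμre t]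
  have hzfc : ∀ t : ℝ, z t = Complex.exp (μc * (t:ℂ)) * fc t := by
    intro t
    simp only [hfdef]
    rw [← mul_assoc, ← Complex.exp_add]
    have he : μc * (t:ℂ) + -μc * (t:ℂ) = 0 := by ring
    rw [he, Complex.exp_zero, one_mul]
  have hz0 : z 0 = ((lam * δ : ℝ) : ℂ) := by
    simp only [hzdef]
    rw [huu0]
    push_cast
    simp [hδdef]
  have hf0 : ‖fc 0‖ = lam * δ := by
    have : fc 0 = z 0 := by
      simp only [hfdef]
      norm_num
    rw [this, hz0, Complex.norm_real, Real.norm_eq_abs, abs_of_nonneg (mul_nonneg hlampos.le hδ0)]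
  set K1 : ℝ := lam * Kq * om with hK1def
  have hK1pos : 0 < K1 := by rw [hK1def]; positivity
  have hpi := Real.pi_pos
  set tstar : ℝ := Real.pi / om + 1 with htsdef
  have htspos : 0 < tstar := by rw [htsdef]; positivity
  set r : ℝ := om^2 with hrdef
  have hrpos : 0 < r := by rw [hrdef]; positivity
  have hgron : ∀ b : ℝ, 0 ≤ b → (∀ t, 0 ≤ t → t < b → uu t ≤ r) →
      ∀ t, t ∈ Set.Icc (0:ℝ) b → ‖fc t‖ ≤ lam * δ * Real.exp (K1 * t) := by
    intro b hb hub t htmem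
    have key := norm_le_gronwallBound_of_norm_deriv_right_le (f := fc)
      (f' := fun t => Complex.exp (-μc * (t:ℂ)) * ((lam * ee t : ℝ) : ℂ)) (δ := lam * δ)
      (K := K1) (ε := 0) (a := 0) (b := b) hfc_cont.continuousOn
      (fun s _ => (hfd s).hasDerivWithinAt) (by rw [hf0]) ?_ t htmem
    · rw [gronwallBound_ε0, sub_zero] at key
      exact key
    · intro s hs
      have hs0 : (0:ℝ) ≤ s := hs.1
      have hsb : s < b := hs.2
      obtain ⟨he0, heK⟩ := hee s hs0
      obtain ⟨hu0', hu1'⟩ := huu01 s hs0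
      have husr : uu s ≤ r := hub s hs0 hsb
      have hn1 : ‖Complex.exp (-μc * (s:ℂ)) * ((lam * ee s : ℝ) : ℂ)‖
          = Real.exp (-(al * s)) * (lam * ee s) := by
        rw [norm_mul, Complex.norm_exp,
          Complex.norm_real, Real.norm_eq_abs, abs_of_nonneg (mul_nonneg hlampos.le he0), hμre s]
      have hn2 : Real.exp (-(al*s)) * (om * uu s) ≤ ‖fc s‖ := by
        rw [hfnorm s]
        apply mul_le_mul_of_nonneg_left _ (Real.exp_pos _).le
        calc om * uu s = (z s).im := (hzim s).symm
        _ ≤ ‖z s‖ := Complex.im_le_norm _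
      rw [hn1]
      calc Real.exp (-(al*s)) * (lam * ee s)
          ≤ Real.exp (-(al*s)) * (lam * (Kq * (r * uu s))) := by
            apply mul_le_mul_of_nonneg_left _ (Real.exp_pos _).le
            apply mul_le_mul_of_nonneg_left _ hlampos.le
            refine heK.trans (mul_le_mul_of_nonneg_left ?_ hKq0.le)
            calc uu s^2 = uu s * uu s := sq (uu s)
            _ ≤ r * uu s := mul_le_mul_of_nonneg_right husr hu0'
        _ = K1 * (Real.exp (-(al*s)) * (om * uu s)) := by rw [hK1def, hrdef]; ring
        _ ≤ K1 * ‖fc s‖ := mul_le_mul_of_nonneg_left hn2 hK1pos.le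
        _ ≤ K1 * ‖fc s‖ + 0 := by linarith
  have huubd : ∀ b : ℝ, 0 ≤ b → (∀ t, 0 ≤ t → t < b → uu t ≤ r) →
      ∀ t, t ∈ Set.Icc (0:ℝ) b → om * uu t ≤ lam * δ * Real.exp ((al + K1) * t) := by
    intro b hb hub t htmem
    have h1 := hgron b hb hub t htmem
    have h2 : om * uu t ≤ ‖z t‖ := by
      rw [← hzim t]; exact Complex.im_le_norm _
    have h3 : ‖z t‖ = Real.exp (al * t) * ‖fc t‖ := by
      rw [hzfc t, norm_mul, Complex.norm_exp, hμre2 t]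
    calc om * uu t ≤ Real.exp (al*t) * ‖fc t‖ := h3 ▸ h2
    _ ≤ Real.exp (al*t) * (lam * δ * Real.exp (K1*t)) :=
        mul_le_mul_of_nonneg_left h1 (Real.exp_pos _).le
    _ = lam * δ * Real.exp ((al+K1)*t) := by
        rw [show (al+K1)*t = al*t + K1*t by ring, Real.exp_add]
        ring
  -- exponent bound
  set β : ℝ := al + 2*K1 with hβdef
  have hβpos : 0 < β := by rw [hβdef]; positivity
  have hβts : β * tstar ≤ al*Real.pi/om + C₂ := by
    rw [hβdef, htsdef, hK1def, hC₂def]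
    exact arith_exponent hom hom1 hlampos hlamlt1.le hal12 hKq1 hpi
  have hβts' : (al + K1) * tstar ≤ al*Real.pi/om + C₂ := by
    refine le_trans ?_ hβts
    apply mul_le_mul_of_nonneg_right _ htspos.le
    rw [hβdef]
    linarith only [hK1pos]
  set Emax : ℝ := Real.exp (al*Real.pi/om + C₂) with hEmdef
  have hEmpos : 0 < Emax := Real.exp_pos _
  set A : ℝ := om^3 * Real.exp (-(al*Real.pi/om + C₂)) with hAdef
  have hApos : 0 < A := by rw [hAdef]; positivity
  have hAEm : A * Emax = om^3 := by
    rw [hAdef, hEmdef, mul_assoc, ← Real.exp_add,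
      show -(al*Real.pi/om + C₂) + (al*Real.pi/om + C₂) = 0 by ring, Real.exp_zero, mul_one]
  set mq : ℝ := min (3*α₀/(8*Kq)) 1 with hmqdef
  have hmq0 : 0 < mq := lt_min (by positivity) one_pos
  have hmq1 : mq ≤ 1 := min_le_right _ _
  have huucont : Continuous uu := by
    rw [huudef]; exact continuous_const.sub hXcont
  set S : Set ℝ := Set.Ici (0:ℝ) ∩ uu ⁻¹' (Set.Ici r) with hSdef
  have hSclosed : IsClosed S := isClosed_Ici.inter (isClosed_Ici.preimage huucont)
  -- key inequality
  have hkey : lam₁ * mq * A ≤ lam * δ := by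
    rcases eq_or_lt_of_le hδ0 with hδz | hδpos
    · -- δ = 0 : contradiction
      exfalso
      by_cases hS : S.Nonempty
      · set T := sInf S with hTdef
        have hTmem : T ∈ S := hSclosed.csInf_mem hS ⟨0, fun t ht => ht.1⟩
        have hT0 : 0 ≤ T := hTmem.1
        have hTub : ∀ t, 0 ≤ t → t < T → uu t ≤ r := by
          intro t ht htT
          have hnot : t ∉ S := notMem_of_lt_csInf htT ⟨0, fun s hs => hs.1⟩
          by_contra hc
          push_neg at hc
          exact hnot ⟨ht, hc.le⟩
        have h2 := huubd T hT0 hTub T ⟨hT0, le_rfl⟩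
        rw [← hδz] at h2
        have h3 : r ≤ uu T := hTmem.2
        have h2' : om * uu T ≤ 0 := by
          calc om * uu T ≤ lam*0*Real.exp ((al+K1)*T) := h2
          _ = 0 := by ring
        have h2'' : 0 < om * uu T :=
          lt_of_lt_of_le (mul_pos hom hrpos) (mul_le_mul_of_nonneg_left h3 hom.le)
        linarith only [h2', h2'']
      · have hub : ∀ t, 0 ≤ t → uu t ≤ r := by
          intro t ht
          by_contra hc
          push_neg at hc
          exact hS ⟨t, ht, hc.le⟩
        have hzero : ∀ t : ℝ, 0 ≤ t → x t = 1 := by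
          intro t ht
          have h2 := huubd (t+1) (by linarith) (fun s hs _ => hub s hs) t ⟨ht, by linarith⟩
          rw [← hδz] at h2
          have h3 : om * uu t ≤ 0 := by
            calc om * uu t ≤ lam * 0 * Real.exp ((al + K1) * t) := h2
            _ = 0 := by ring
          have h4 : 0 ≤ uu t := (huu01 t ht).1
          have h5 : uu t ≤ 0 := by
            have h7 : om * uu t ≤ om * 0 := by rw [mul_zero]; exact h3
            exact le_of_mul_le_mul_left h7 hom
          have h6 : X t = 1 := by
            have h8 : uu t = 1 - X t := rfl
            linarith only [h4, h5, h8]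
          rw [hxX t ht, h6]
        have hlim1 : Filter.Tendsto x Filter.atTop (nhds 1) := by
          apply Filter.Tendsto.congr' _ tendsto_const_nhds
          filter_upwards [Filter.eventually_ge_atTop (0:ℝ)] with t ht
          exact (hzero t ht).symm
        have hρ1 := tendsto_nhds_unique hxlim hlim1
        have hρ2 := hctx.rho_lt_one
        linarith only [hρ1, hρ2]
    · -- δ > 0
      have hQpos : 0 < lam * δ := mul_pos hlampos hδpos
      by_cases hcase : ∀ t, 0 ≤ t → t < tstar → uu t ≤ r
      · -- CASE 1
        have hub := huubd tstar htspos.le hcase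
        -- FTC
        have heecont : Continuous ee := by
          rw [heedef]
          exact (continuous_const.mul huucont).sub (continuous_const.sub hψcont)
        have hfpcont : Continuous (fun s : ℝ => Complex.exp (-μc*(s:ℂ)) * ((lam * ee s : ℝ):ℂ)) := by
          apply Continuous.mul
          · exact Complex.continuous_exp.comp (continuous_const.mul Complex.continuous_ofReal)
          · exact Complex.continuous_ofReal.comp (continuous_const.mul heecont)
        set J : ℂ := ∫ s in (0:ℝ)..tstar, Complex.exp (-μc*(s:ℂ)) * ((lam * ee s : ℝ):ℂ) with hJdef
        have hJeq : J = fc tstar - fc 0 :=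
          intervalIntegral.integral_eq_sub_of_hasDerivAt (fun s _ => hfd s)
            (hfpcont.intervalIntegrable 0 tstar)
        have hfc0 : fc 0 = ((lam*δ:ℝ):ℂ) := by
          have h0 : fc 0 = Complex.exp (-μc * ((0:ℝ):ℂ)) * z 0 := rfl
          rw [h0, Complex.ofReal_zero, mul_zero, Complex.exp_zero, one_mul, hz0]
        have hfcts : fc tstar = ((lam*δ:ℝ):ℂ) + J := by
          rw [hJeq, hfc0]; ring
        -- norm bound on J
        have hExpid : ∀ s : ℝ, Real.exp (-(al*s)) * (Real.exp ((al+K1)*s))^2 = Real.exp (β*s) := by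
          intro s
          rw [sq, ← Real.exp_add, ← Real.exp_add, hβdef]
          congr 1
          ring
        have hC3 : ∀ s : ℝ, s ∈ Set.Icc (0:ℝ) tstar →
            ‖Complex.exp (-μc*(s:ℂ)) * ((lam * ee s : ℝ):ℂ)‖
              ≤ Kq*(lam*δ)^2/om^2 * Real.exp (β*s) := by
          intro s hs
          obtain ⟨he0, heK⟩ := hee s hs.1
          obtain ⟨hu0', hu1'⟩ := huu01 s hs.1
          have hn1 : ‖Complex.exp (-μc * (s:ℂ)) * ((lam * ee s : ℝ) : ℂ)‖
              = Real.exp (-(al * s)) * (lam * ee s) := by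
            rw [norm_mul, Complex.norm_exp,
              Complex.norm_real, Real.norm_eq_abs, abs_of_nonneg (mul_nonneg hlampos.le he0), hμre s]
          rw [hn1]
          have hub' : uu s ≤ lam*δ/om * Real.exp ((al+K1)*s) := by
            rw [div_mul_eq_mul_div, le_div_iff₀ hom]
            calc uu s * om = om * uu s := by ring
            _ ≤ lam * δ * Real.exp ((al+K1)*s) := hub s hs
          have husq : uu s^2 ≤ (lam*δ/om * Real.exp ((al+K1)*s))^2 :=
            pow_le_pow_left₀ hu0' hub' 2
          calc Real.exp (-(al*s)) * (lam * ee s)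
              ≤ Real.exp (-(al*s)) * (lam * (Kq * (uu s)^2)) := by
                apply mul_le_mul_of_nonneg_left _ (Real.exp_pos _).le
                exact mul_le_mul_of_nonneg_left heK hlampos.le
            _ ≤ Real.exp (-(al*s)) * (1 * (Kq * (lam*δ/om * Real.exp ((al+K1)*s))^2)) := by
                apply mul_le_mul_of_nonneg_left _ (Real.exp_pos _).le
                apply mul_le_mul hlamlt1.le (mul_le_mul_of_nonneg_left husq hKq0.le)
                  (by positivity) zero_le_one
            _ = Kq*(lam*δ)^2/om^2 * (Real.exp (-(al*s)) * (Real.exp ((al+K1)*s))^2) := by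
                field_simp
            _ = Kq*(lam*δ)^2/om^2 * Real.exp (β*s) := by rw [hExpid s]
        have hAnti : ∀ s : ℝ, HasDerivAt (fun s => Real.exp (β*s)/β) (Real.exp (β*s)) s := by
          intro s
          have h1 : HasDerivAt (fun s : ℝ => β*s) β s := by
            simpa using (hasDerivAt_id s).const_mul β
          have h2 := h1.exp
          refine (h2.div_const β).congr_deriv (Eq.symm ?_)
          exact (mul_div_cancel_right₀ _ hβpos.ne').symm
        have hIntExp : ∫ s in (0:ℝ)..tstar, Real.exp (β*s)
            = (Real.exp (β*tstar) - 1)/β := by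
          rw [intervalIntegral.integral_eq_sub_of_hasDerivAt (fun s _ => hAnti s)
            ((Real.continuous_exp.comp (continuous_const.mul continuous_id)).intervalIntegrable 0 tstar)]
          simp [Real.exp_zero]
          ring
        have hJnorm : ‖J‖ ≤ Kq*(lam*δ)^2/om^2 * ((Real.exp (β*tstar) - 1)/β) := by
          rw [hJdef]
          refine (intervalIntegral.norm_integral_le_integral_norm htspos.le).trans ?_
          have h1 : ∫ s in (0:ℝ)..tstar, ‖Complex.exp (-μc*(s:ℂ)) * ((lam * ee s : ℝ):ℂ)‖
              ≤ ∫ s in (0:ℝ)..tstar, Kq*(lam*δ)^2/om^2 * Real.exp (β*s) := by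
            apply intervalIntegral.integral_mono_on htspos.le
              (hfpcont.norm.intervalIntegrable 0 tstar)
              ((continuous_const.mul
                (Real.continuous_exp.comp (continuous_const.mul continuous_id))).intervalIntegrable
                0 tstar)
            exact hC3
          refine h1.trans ?_
          rw [intervalIntegral.integral_const_mul, hIntExp]
        -- angular relation
        have himz : om * uu tstar = Real.exp (al*tstar) *
            (Real.sin (om*tstar) * (fc tstar).re + Real.cos (om*tstar) * (fc tstar).im) := by
          rw [← hzim tstar, hzfc tstar, Complex.mul_im, Complex.exp_re, Complex.exp_im,
            hμre2, hμim2]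
          ring
        have homts : om * tstar = om + Real.pi := by
          rw [htsdef, mul_add, mul_one, mul_div_cancel₀ _ hom.ne']
          ring
        have hsinval : Real.sin (om*tstar) = -Real.sin om := by
          rw [homts, Real.sin_add_pi]
        have hcosval : Real.cos (om*tstar) = -Real.cos om := by
          rw [homts, Real.cos_add_pi]
        have hsinlb : 3/4 * om ≤ Real.sin om := by
          have h1 := Real.sin_gt_sub_cube hom
          have h2a : om^2 ≤ 1 := by nlinarith only [hom.le, hom1]
          have h2 : om^3 ≤ om := by nlinarith only [hom.le, h2a]
          linarith only [h1, h2, hom]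
        have huts0 : 0 ≤ om * uu tstar := mul_nonneg hom.le (huu01 tstar htspos.le).1
        rw [himz] at huts0
        have hbrak : 0 ≤ Real.sin (om*tstar) * (fc tstar).re
            + Real.cos (om*tstar) * (fc tstar).im := by
          by_contra hneg
          push_neg at hneg
          have hcon := mul_neg_of_pos_of_neg (Real.exp_pos (al*tstar)) hneg
          linarith only [hcon, huts0]
        rw [hsinval, hcosval, hfcts] at hbrak
        simp only [Complex.add_re, Complex.add_im, Complex.ofReal_re, Complex.ofReal_im] at hbrak
        -- sin om * (lam δ) ≤ 2 ‖J‖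
        have hre : |J.re| ≤ ‖J‖ := by
          exact Complex.abs_re_le_norm J
        have him : |J.im| ≤ ‖J‖ := by
          exact Complex.abs_im_le_norm J
        have hsin0 : 0 ≤ Real.sin om := by
          apply Real.sin_nonneg_of_nonneg_of_le_pi hom.le
          linarith [Real.pi_gt_three]
        have e1 : -Real.sin om * J.re ≤ ‖J‖ := by
          calc -Real.sin om * J.re ≤ |(-Real.sin om) * J.re| := le_abs_self _
          _ = |Real.sin om| * |J.re| := by rw [abs_mul, abs_neg]
          _ ≤ 1 * ‖J‖ := mul_le_mul (by rw [abs_of_nonneg hsin0]; exact Real.sin_le_one om)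
                hre (abs_nonneg _) zero_le_one
          _ = ‖J‖ := one_mul _
        have e2 : -Real.cos om * J.im ≤ ‖J‖ := by
          calc -Real.cos om * J.im ≤ |(-Real.cos om) * J.im| := le_abs_self _
          _ = |Real.cos om| * |J.im| := by rw [abs_mul, abs_neg]
          _ ≤ 1 * ‖J‖ := mul_le_mul (Real.abs_cos_le_one om) him (abs_nonneg _) zero_le_one
          _ = ‖J‖ := one_mul _
        have h2J : Real.sin om * (lam*δ) ≤ 2*‖J‖ := by linarith only [hbrak, e1, e2]
        -- main chain
        have hchain : (3/4)*om*(lam*δ) ≤ 2*(Kq*(lam*δ)^2/om^2*(Emax/β)) := by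
          have t1 : (3/4)*om*(lam*δ) ≤ Real.sin om * (lam*δ) :=
            mul_le_mul_of_nonneg_right hsinlb hQpos.le
          have hE1 : Real.exp (β*tstar) ≤ Emax := by
            rw [hEmdef]; exact Real.exp_le_exp.2 hβts
          have t2 : (Real.exp (β*tstar) - 1)/β ≤ Emax/β :=
            (div_le_div_iff_of_pos_right hβpos).2 (by linarith only [hE1])
          have t3 : ‖J‖ ≤ Kq*(lam*δ)^2/om^2*(Emax/β) :=
            hJnorm.trans (mul_le_mul_of_nonneg_left t2 (by positivity))
          calc (3/4)*om*(lam*δ) ≤ Real.sin om * (lam*δ) := t1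
          _ ≤ 2*‖J‖ := h2J
          _ ≤ 2*(Kq*(lam*δ)^2/om^2*(Emax/β)) := by
              apply mul_le_mul_of_nonneg_left t3
              norm_num
        have hfinal := arith_case1 hom hQpos hKq1 hβpos hα₀pos
          (by rw [hβdef]; linarith only [hala0, hK1pos]) hEmpos hchain
        -- 3*α₀/(8*Kq) * (om^3/Emax) ≤ lam*δ ; om^3/Emax = A
        have hA2 : om^3/Emax = A := by
          rw [div_eq_iff hEmpos.ne']
          exact hAEm.symm
        rw [hA2] at hfinal
        calc lam₁ * mq * A ≤ 1 * mq * A := by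
              apply mul_le_mul_of_nonneg_right
                (mul_le_mul_of_nonneg_right hlam₁lt1.le hmq0.le) hApos.le
        _ = mq * A := by ring
        _ ≤ (3*α₀/(8*Kq)) * A := by
              apply mul_le_mul_of_nonneg_right _ hApos.le
              rw [hmqdef]
              exact min_le_left _ _
        _ ≤ lam * δ := hfinal
      · -- CASE 2 : uu exceeds r before tstar
        push_neg at hcase
        obtain ⟨t0, ht00, ht0ts, ht0r⟩ := hcase
        have hS : S.Nonempty := ⟨t0, ht00, ht0r.le⟩
        set T := sInf S with hTdef
        have hTmem : T ∈ S := hSclosed.csInf_mem hS ⟨0, fun t ht => ht.1⟩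
        have hT0 : 0 ≤ T := hTmem.1
        have hTts : T ≤ tstar := le_trans (csInf_le ⟨0, fun t ht => ht.1⟩ ⟨ht00, ht0r.le⟩) ht0ts.le
        have hTub : ∀ t, 0 ≤ t → t < T → uu t ≤ r := by
          intro t ht htT
          have hnot : t ∉ S := notMem_of_lt_csInf htT ⟨0, fun s hs => hs.1⟩
          by_contra hc
          push_neg at hc
          exact hnot ⟨ht, hc.le⟩
        have h2 := huubd T hT0 hTub T ⟨hT0, le_rfl⟩
        have h3 : om * r ≤ om * uu T := mul_le_mul_of_nonneg_left hTmem.2 hom.le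
        have h4 : Real.exp ((al+K1)*T) ≤ Emax := by
          rw [hEmdef]
          apply Real.exp_le_exp.2
          refine le_trans ?_ hβts'
          apply mul_le_mul_of_nonneg_left hTts (by positivity)
        have h5 : om^3 ≤ lam * δ * Emax := by
          have h6 : om * r = om^3 := by rw [hrdef]; ring
          rw [← h6]
          calc om * r ≤ om * uu T := h3
          _ ≤ lam * δ * Real.exp ((al+K1)*T) := h2
          _ ≤ lam * δ * Emax := mul_le_mul_of_nonneg_left h4 hQpos.le
        have hAle : A ≤ lam * δ := by
          have := hAEm
          rw [← this] at h5
          exact le_of_mul_le_mul_right h5 hEmpos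
        calc lam₁ * mq * A ≤ 1 * 1 * A := by
              apply mul_le_mul_of_nonneg_right _ hApos.le
              calc lam₁ * mq ≤ 1 * mq := mul_le_mul_of_nonneg_right hlam₁lt1.le hmq0.le
              _ ≤ 1 * 1 := by rw [one_mul, one_mul]; exact hmq1
        _ = A := by ring
        _ ≤ lam * δ := hAle
  -- conclusion
  rw [hder]
  apply neg_le_neg
  have hargs : -(Real.pi*(1-lam)/(2*om)) + (-C₂) = -(al*Real.pi/om + C₂) := by
    have h0 : om ≠ 0 := hom.ne'
    rw [haldef]
    field_simp
    ring
  calc lam₁ * c * om ^ 3 * Real.exp (-(Real.pi * (1 - lam) / (2 * om)))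
      = lam₁ * mq * (om^3 * (Real.exp (-(Real.pi*(1-lam)/(2*om))) * Real.exp (-C₂))) := by
        rw [hcdef, hmqdef]
        ring
  _ = lam₁ * mq * A := by
        rw [← Real.exp_add, hargs, hAdef]
  _ ≤ lam * δ := hkey
end

section
/- Let d > 1 be real, λ₁ = 2d − 1 − 2√(d(d−1)), 0 < λ < λ₁, Δ = λ² − 2λ(2d−1) + 1 > 0, α = (1 − λ − √Δ)/2, β = (1 − λ + √Δ)/2, and γ̄ = β/α. Let 1 < u < γ̄ and L > 0. Suppose f : [0,∞) → [0,∞) is measurable with sup_{t ≥ 0} f(t) e^{−uαt} < ∞ and satisfies, for all t ≥ 0, f(t) ≤ L e^{uαt} + λ d e^{−λt} ∫₀ᵗ e^{(λ+1)v} (∫_v^∞ f(s) e^{−s} ds) dv. Then for all t ≥ 0, f(t) ≤ [L (uα + λ)(1 − uα) / ((1 − λ)uα − λ(d−1) − u²α²)] · e^{uαt}. -/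
open MeasureTheory Set Filter

lemma my_integral_exp_neg_mul_Ioi {b : ℝ} (hb : 0 < b) (v : ℝ) :
    ∫ s in Set.Ioi v, Real.exp (-(b * s)) = Real.exp (-(b * v)) / b := by
  have hderiv : ∀ x ∈ Ici v, HasDerivAt (fun x => -Real.exp (-(b * x)) / b)
      (Real.exp (-(b * x))) x := by
    intro x _
    have h1 : HasDerivAt (fun x : ℝ => -(b * x)) (-b) x := by
      exact ((hasDerivAt_id x).const_mul b).neg.congr_deriv (by ring)
    have h3 := (h1.exp.neg).div_const b
    refine h3.congr_deriv ?_
    rw [div_eq_iff hb.ne']; ring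
  have htend : Tendsto (fun x => -Real.exp (-(b * x)) / b) atTop (nhds 0) := by
    have h0 : Tendsto (fun x : ℝ => b * x) atTop atTop :=
      Filter.Tendsto.const_mul_atTop hb tendsto_id
    have h1 : Tendsto (fun x : ℝ => Real.exp (-(b * x))) atTop (nhds 0) :=
      Real.tendsto_exp_neg_atTop_nhds_zero.comp h0
    simpa using (h1.neg).div_const b
  have hint : IntegrableOn (fun x => Real.exp (-(b * x))) (Ioi v) := by
    have := exp_neg_integrableOn_Ioi v hb
    simpa [neg_mul] using this
  have key := integral_Ioi_of_hasDerivAt_of_tendsto' hderiv hint htend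
  rw [key]; ring

set_option maxHeartbeats 1600000 in
/-- subcritical integral-inequality bound. For d > 1,
0 < λ < λ₁, Δ = λ² − 2λ(2d−1) + 1 > 0, α = (1−λ−√Δ)/2, β = (1−λ+√Δ)/2,
γ̄ = β/α, 1 < u < γ̄ and L > 0: if f : [0,∞) → [0,∞) is measurable with
sup_{t≥0} f(t)e^{−uαt} < ∞ and
f(t) ≤ L e^{uαt} + λd e^{−λt} ∫₀ᵗ e^{(λ+1)v} (∫_v^∞ f(s)e^{−s} ds) dv for all t ≥ 0,
then f(t) ≤ [L(uα+λ)(1−uα)/((1−λ)uα − λ(d−1) − u²α²)] e^{uαt} for all t ≥ 0. -/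
theorem subcritical_integral_bound {d lam Δ α β : ℝ} (hd : 1 < d)
    (hlam0 : 0 < lam) (hlam1 : lam < 2 * d - 1 - 2 * Real.sqrt (d * (d - 1)))
    (hΔ : Δ = lam ^ 2 - 2 * lam * (2 * d - 1) + 1)
    (hα : α = (1 - lam - Real.sqrt Δ) / 2)
    (hβ : β = (1 - lam + Real.sqrt Δ) / 2)
    {u : ℝ} (hu1 : 1 < u) (hu2 : u < β / α)
    {L : ℝ} (hL : 0 < L)
    {f : ℝ → ℝ} (hfmeas : Measurable f) (hfnonneg : ∀ t, 0 ≤ t → 0 ≤ f t)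
    (hfbdd : ∃ C : ℝ, ∀ t, 0 ≤ t → f t * Real.exp (-(u * α * t)) ≤ C)
    (hineq : ∀ t, 0 ≤ t →
      f t ≤ L * Real.exp (u * α * t) + lam * d * Real.exp (-(lam * t)) *
        ∫ v in (0:ℝ)..t, Real.exp ((lam + 1) * v) *
          ∫ s in Set.Ioi v, f s * Real.exp (-s)) :
    ∀ t, 0 ≤ t →
      f t ≤ L * (u * α + lam) * (1 - u * α) /
          ((1 - lam) * u * α - lam * (d - 1) - u ^ 2 * α ^ 2)
        * Real.exp (u * α * t) := by
  -- ## numeric facts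
  set s := Real.sqrt (d * (d - 1)) with hs_def
  have hs0 : 0 ≤ s := Real.sqrt_nonneg _
  have hs2 : s ^ 2 = d * (d - 1) := by
    rw [hs_def, Real.sq_sqrt]; nlinarith
  have hsgt : d - 1 < s := by nlinarith
  have hlt1 : lam < 1 := by nlinarith
  have hΔpos : 0 < Δ := by nlinarith [hlam1, hs2, hlam0]
  set r := Real.sqrt Δ with hr_def
  have hr2 : r ^ 2 = Δ := by rw [hr_def, Real.sq_sqrt hΔpos.le]
  have hr0 : 0 < r := Real.sqrt_pos.mpr hΔpos
  have hsum : α + β = 1 - lam := by rw [hα, hβ]; ring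
  have hprod : α * β = lam * (d - 1) := by
    rw [hα, hβ]
    have : (1 - lam - r) / 2 * ((1 - lam + r) / 2) = ((1 - lam) ^ 2 - r ^ 2) / 4 := by ring
    rw [this, hr2, hΔ]; ring
  have hαpos : 0 < α := by
    rw [hα]
    have : r < 1 - lam := by nlinarith [hr2, hΔ, hr0]
    linarith
  have hβlt1 : β < 1 := by
    rw [hβ]
    have : r < 1 + lam := by nlinarith [hr2, hΔ, hr0]
    linarith
  have huαβ : u * α < β := (lt_div_iff₀ hαpos).mp hu2
  have huα1 : u * α < 1 := huαβ.trans hβlt1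
  have huαpos : 0 < u * α := mul_pos (by linarith) hαpos
  have hαuα : α < u * α := by nlinarith
  have hD : 0 < (1 - lam) * (u * α) - lam * (d - 1) - (u * α) ^ 2 := by
    have key : (1 - lam) * (u * α) - lam * (d - 1) - (u * α) ^ 2
        = (u * α - α) * (β - u * α) := by
      have e1 : 1 - lam = α + β := hsum.symm
      rw [e1, ← hprod]; ring
    rw [key]
    exact mul_pos (by linarith) (by linarith)
  set b := 1 - u * α with hb_def
  have hb : 0 < b := by linarith
  set c := lam + u * α with hc_def
  have hc : 0 < c := by linarith
  -- ## the sup M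
  obtain ⟨C, hC⟩ := hfbdd
  set S : Set ℝ := (fun t => f t * Real.exp (-(u * α * t))) '' Set.Ici 0 with hS_def
  have hSne : S.Nonempty := ⟨_, ⟨0, Set.mem_Ici.mpr le_rfl, rfl⟩⟩
  have hSbdd : BddAbove S := ⟨C, by rintro x ⟨t, ht, rfl⟩; exact hC t (Set.mem_Ici.mp ht)⟩
  set M := sSup S with hM_def
  have hMub : ∀ t, 0 ≤ t → f t * Real.exp (-(u * α * t)) ≤ M :=
    fun t ht => le_csSup hSbdd ⟨t, Set.mem_Ici.mpr ht, rfl⟩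
  have hfM : ∀ t, 0 ≤ t → f t ≤ M * Real.exp (u * α * t) := by
    intro t ht
    have h1 := hMub t ht
    have h2 : (0:ℝ) < Real.exp (u * α * t) := Real.exp_pos _
    have := mul_le_mul_of_nonneg_right h1 h2.le
    rw [mul_assoc, ← Real.exp_add] at this
    simpa using this
  have hM0 : 0 ≤ M := by
    have := hMub 0 le_rfl
    have h0 := hfnonneg 0 le_rfl
    simp at this
    linarith
  -- ## the function g and its integrability
  set g : ℝ → ℝ := fun x => f x * Real.exp (-x) with hg_def
  have hgmeas : Measurable g := hfmeas.mul (Real.measurable_exp.comp measurable_neg)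
  have hgbound : ∀ x, 0 ≤ x → g x ≤ M * Real.exp (-(b * x)) := by
    intro x hx
    have h1 := hMub x hx
    have h2 : g x = f x * Real.exp (-(u * α * x)) * Real.exp (-(b * x)) := by
      rw [hg_def]; simp only []
      rw [mul_assoc, ← Real.exp_add]
      rw [hb_def]; ring_nf
    rw [h2]
    exact mul_le_mul_of_nonneg_right h1 (Real.exp_pos _).le
  have hgnonneg : ∀ x, 0 ≤ x → 0 ≤ g x :=
    fun x hx => mul_nonneg (hfnonneg x hx) (Real.exp_pos _).le
  have hMexp_int : ∀ v : ℝ, IntegrableOn (fun x => M * Real.exp (-(b * x))) (Set.Ioi v) := by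
    intro v
    have := exp_neg_integrableOn_Ioi v hb
    have h2 : IntegrableOn (fun x => Real.exp (-(b * x))) (Set.Ioi v) := by
      simpa [neg_mul] using this
    exact h2.const_mul M
  have hg_int : ∀ v, 0 ≤ v → IntegrableOn g (Set.Ioi v) := by
    intro v hv
    refine Integrable.mono' (hMexp_int v) hgmeas.aestronglyMeasurable ?_
    rw [ae_restrict_iff' measurableSet_Ioi]
    filter_upwards with x hx
    have hx0 : 0 ≤ x := le_of_lt (lt_of_le_of_lt hv hx)
    rw [Real.norm_eq_abs, abs_of_nonneg (hgnonneg x hx0)]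
    exact hgbound x hx0
  -- bound on the tail integral
  have hIbound : ∀ v, 0 ≤ v →
      (∫ x in Set.Ioi v, g x) ≤ M * Real.exp (-(b * v)) / b := by
    intro v hv
    have h1 : (∫ x in Set.Ioi v, g x) ≤ ∫ x in Set.Ioi v, M * Real.exp (-(b * x)) := by
      refine setIntegral_mono_on (hg_int v hv) (hMexp_int v) measurableSet_Ioi ?_
      intro x hx
      exact hgbound x (le_of_lt (lt_of_le_of_lt hv hx))
    have h2 : (∫ x in Set.Ioi v, M * Real.exp (-(b * x)))
        = M * Real.exp (-(b * v)) / b := by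
      rw [integral_const_mul, my_integral_exp_neg_mul_Ioi hb v]
      ring
    linarith [h1, h2.le, h2.ge]
  -- ## main estimate for each t
  have hg_Ici : IntegrableOn g (Set.Ici 0) := by
    rw [integrableOn_Ici_iff_integrableOn_Ioi]
    exact hg_int 0 le_rfl
  have hkey : ∀ t, 0 ≤ t →
      f t ≤ (L + lam * d * M / (b * c)) * Real.exp (u * α * t) := by
    intro t ht
    set I : ℝ → ℝ := fun v => ∫ x in Set.Ioi v, g x with hI_def
    set P : ℝ → ℝ := fun v => ∫ x in Set.Ioc 0 v, g x with hP_def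
    have hsplit : ∀ v, 0 ≤ v → I v = I 0 - P v := by
      intro v hv
      have hu : Set.Ioc 0 v ∪ Set.Ioi v = Set.Ioi (0:ℝ) := Set.Ioc_union_Ioi_eq_Ioi hv
      have hdisj : Disjoint (Set.Ioc (0:ℝ) v) (Set.Ioi v) :=
        Set.Ioc_disjoint_Ioi le_rfl
      have := MeasureTheory.setIntegral_union hdisj measurableSet_Ioi
        ((hg_int 0 le_rfl).mono_set Set.Ioc_subset_Ioi_self) (hg_int v hv) (f := g)
        (μ := MeasureTheory.volume)
      rw [hu] at this
      rw [hI_def, hP_def]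
      simp only []
      rw [this]
      ring
    set G : ℝ → ℝ := fun v => Real.exp ((lam + 1) * v) * (I 0 - P v) with hG_def
    have hGcont : ContinuousOn G (Set.Icc 0 t) := by
      apply ContinuousOn.mul
      · exact (Real.continuous_exp.comp (continuous_const.mul continuous_id)).continuousOn
      · exact continuousOn_const.sub
          (intervalIntegral.continuousOn_primitive (hg_Ici.mono_set Set.Icc_subset_Ici_self))
    have hEqOn : Set.EqOn (fun v => Real.exp ((lam + 1) * v) * I v) G (Set.uIcc 0 t) := by
      intro v hv
      rw [Set.uIcc_of_le ht] at hv
      simp only [hG_def]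
      rw [hsplit v hv.1]
    have hstep1 : (∫ v in (0:ℝ)..t, Real.exp ((lam + 1) * v) * I v)
        = ∫ v in (0:ℝ)..t, G v := intervalIntegral.integral_congr hEqOn
    have hGle : ∀ v ∈ Set.Icc (0:ℝ) t, G v ≤ M / b * Real.exp (c * v) := by
      intro v hv
      have h1 : G v = Real.exp ((lam + 1) * v) * I v := by
        simp only [hG_def]; rw [hsplit v hv.1]
      have h2 : I v ≤ M * Real.exp (-(b * v)) / b := hIbound v hv.1
      have h3 : Real.exp ((lam + 1) * v) * I v
          ≤ Real.exp ((lam + 1) * v) * (M * Real.exp (-(b * v)) / b) :=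
        mul_le_mul_of_nonneg_left h2 (Real.exp_pos _).le
      have h4 : Real.exp ((lam + 1) * v) * (M * Real.exp (-(b * v)) / b)
          = M / b * Real.exp (c * v) := by
        rw [mul_comm (Real.exp ((lam + 1) * v)), div_mul_eq_mul_div, mul_assoc,
          ← Real.exp_add]
        have : (lam + 1) * v + -(b * v) = c * v := by rw [hb_def, hc_def]; ring
        rw [← this]
        ring
      rw [h1]
      linarith [h3, h4.le]
    have hGint : IntervalIntegrable G MeasureTheory.volume 0 t := by
      apply ContinuousOn.intervalIntegrable
      rwa [Set.uIcc_of_le ht]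
    have hHint : IntervalIntegrable (fun v => M / b * Real.exp (c * v))
        MeasureTheory.volume 0 t :=
      (Continuous.intervalIntegrable (continuous_const.mul
        (Real.continuous_exp.comp (continuous_const.mul continuous_id))) 0 t)
    have hstep2 : (∫ v in (0:ℝ)..t, G v) ≤ ∫ v in (0:ℝ)..t, M / b * Real.exp (c * v) :=
      intervalIntegral.integral_mono_on ht hGint hHint hGle
    have hstep3 : (∫ v in (0:ℝ)..t, M / b * Real.exp (c * v))
        = M / b * ((Real.exp (c * t) - 1) / c) := by
      rw [intervalIntegral.integral_const_mul]
      congr 1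
      rw [intervalIntegral.integral_comp_mul_left Real.exp hc.ne', integral_exp,
        smul_eq_mul, mul_zero, Real.exp_zero]
      ring
    have hA : (∫ v in (0:ℝ)..t, Real.exp ((lam + 1) * v) * I v)
        ≤ M / (b * c) * Real.exp (c * t) := by
      rw [hstep1]
      have h5 : M / b * ((Real.exp (c * t) - 1) / c) ≤ M / (b * c) * Real.exp (c * t) := by
        have hMb : 0 ≤ M / b := div_nonneg hM0 hb.le
        rw [div_mul_div_comm, div_mul_eq_mul_div,
          div_le_div_iff₀ (mul_pos hb hc) (mul_pos hb hc)]
        nlinarith [Real.exp_pos (c * t), hM0, mul_pos hb hc,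
          mul_nonneg hM0 (mul_pos hb hc).le]
      linarith [hstep2, hstep3.le]
    have h6 := hineq t ht
    have h7 : lam * d * Real.exp (-(lam * t)) *
        (∫ v in (0:ℝ)..t, Real.exp ((lam + 1) * v) * I v)
        ≤ lam * d * Real.exp (-(lam * t)) * (M / (b * c) * Real.exp (c * t)) := by
      apply mul_le_mul_of_nonneg_left hA
      positivity
    have h8 : lam * d * Real.exp (-(lam * t)) * (M / (b * c) * Real.exp (c * t))
        = lam * d * M / (b * c) * Real.exp (u * α * t) := by
      have he : Real.exp (-(lam * t)) * Real.exp (c * t) = Real.exp (u * α * t) := by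
        rw [← Real.exp_add]
        congr 1
        rw [hc_def]; ring
      calc lam * d * Real.exp (-(lam * t)) * (M / (b * c) * Real.exp (c * t))
          = lam * d * M / (b * c) * (Real.exp (-(lam * t)) * Real.exp (c * t)) := by ring
        _ = lam * d * M / (b * c) * Real.exp (u * α * t) := by rw [he]
    have h9 : f t ≤ L * Real.exp (u * α * t) + lam * d * M / (b * c) * Real.exp (u * α * t) := by
      calc f t ≤ _ := h6
        _ ≤ L * Real.exp (u * α * t) + lam * d * Real.exp (-(lam * t)) *
            (M / (b * c) * Real.exp (c * t)) := by
          simp only [hI_def] at h7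
          linarith [h7]
        _ = _ := by rw [h8]
    linarith [h9, (by ring : (L + lam * d * M / (b * c)) * Real.exp (u * α * t)
      = L * Real.exp (u * α * t) + lam * d * M / (b * c) * Real.exp (u * α * t))]
  -- ## conclude : M satisfies the fixed point inequality
  have hMle : M ≤ L + lam * d * M / (b * c) := by
    apply csSup_le hSne
    rintro x ⟨t, ht, rfl⟩
    have ht' : (0:ℝ) ≤ t := Set.mem_Ici.mp ht
    have h1 := hkey t ht'
    have h2 := mul_le_mul_of_nonneg_right h1 (Real.exp_pos (-(u * α * t))).le
    rw [mul_assoc (L + lam * d * M / (b * c)), ← Real.exp_add] at h2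
    simpa using h2
  set D := (1 - lam) * (u * α) - lam * (d - 1) - (u * α) ^ 2 with hD_def
  have hbcD : b * c - lam * d = D := by rw [hb_def, hc_def, hD_def]; ring
  have hbc : 0 < b * c := mul_pos hb hc
  have hMfinal : M ≤ L * c * b / D := by
    rw [le_div_iff₀ hD]
    have h2 : (L + lam * d * M / (b * c)) * (b * c) = L * (b * c) + lam * d * M := by
      field_simp
    have h1 : M * (b * c) ≤ L * (b * c) + lam * d * M := by
      have h0 := mul_le_mul_of_nonneg_right hMle hbc.le
      rwa [h2] at h0
    have h3 : M * D = M * (b * c) - lam * d * M := by rw [← hbcD]; ring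
    linarith [h1, h3.le, h3.ge]
  intro t ht
  have h1 := hfM t ht
  have h2 : M * Real.exp (u * α * t) ≤ L * c * b / D * Real.exp (u * α * t) :=
    mul_le_mul_of_nonneg_right hMfinal (Real.exp_pos _).le
  have h3 : L * c * b / D = L * (u * α + lam) * (1 - u * α) /
      ((1 - lam) * u * α - lam * (d - 1) - u ^ 2 * α ^ 2) := by
    rw [hc_def, hb_def, hD_def]
    congr 1
    · ring
    · ring
  linarith [h1, h2, h3.le, h3.ge,
    mul_le_mul_of_nonneg_right h3.le (Real.exp_pos (u * α * t)).le]
end
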